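/- Let X = [x_1,…,x_p] ∈ ℝ^{n×p} be full rank with unit-norm columns, suppose n ≥ p + M, fix j, and let s_j ∈ [0, (M+1)σ_j²/M]. Let R ∈ ℝ^{n×M} have orthonormal columns orthogonal to the column space of X, and let C ∈ ℝ^{M×M} satisfy CᵀC = s_j I_M + s_j(1 − s_j/σ_j²)e_M e_Mᵀ (such C exists since the right-hand side is positive semidefinite). Then the multiple knockoff matrix X̃^{(j)} = [(s_j/σ_j²)P_{\j}x_j + (1 − s_j/σ_j²)x_j]e_Mᵀ + RC, whose columns are x̃_j^{(1)},…,x̃_j^{(M)}, satisfies for every m ∈ {1,…,M}: (i) x_iᵀx̃_j^{(m)} = x_iᵀx_j for all i ≠ j; (ii) x_jᵀx̃_j^{(m)} = 1 − s_j; (iii) (x̃_j^{(m)})ᵀx̃_j^{(m)} = 1; and (iv) (x̃_j^{(m)})ᵀx̃_j^{(ℓ)} = 1 − s_j for all ℓ ≠ m. -/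

import Mathlib

open Matrix

/-- Lemma 2.1, construction of multiple knockoffs: with
`px = P_{\j}x_j`, `σj2 = ‖x_j - px‖²`, `s_j ∈ [0, (M+1)σ_j²/M]`, `R` an `n × M` matrix
with orthonormal columns orthogonal to the column space of `X`, and `C` with
`CᵀC = s_j I_M + s_j(1 - s_j/σ_j²) e_M e_Mᵀ`, the multiple knockoff matrix
`X̃^{(j)} = [(s_j/σ_j²)P_{\j}x_j + (1 - s_j/σ_j²)x_j] e_Mᵀ + RC` satisfies, for every `m`:
(i) `x_iᵀx̃_j^{(m)} = x_iᵀx_j` for `i ≠ j`; (ii) `x_jᵀx̃_j^{(m)} = 1 - s_j`;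
(iii) `(x̃_j^{(m)})ᵀx̃_j^{(m)} = 1`; (iv) `(x̃_j^{(m)})ᵀx̃_j^{(ℓ)} = 1 - s_j` for `ℓ ≠ m`. -/
theorem stmt_8 (n p M : ℕ) (hM : 1 ≤ M) (hnpM : p + M ≤ n)
    (X : Matrix (Fin n) (Fin p) ℝ)
    (hrank : X.rank = p)
    (hcols : ∀ j, Xᵀ j ⬝ᵥ Xᵀ j = 1)
    (j : Fin p)
    (px : Fin n → ℝ)
    (hpx_mem : px ∈ Submodule.span ℝ ((fun i : Fin p => Xᵀ i) '' {i : Fin p | i ≠ j}))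
    (hpx_orth : ∀ i, i ≠ j → Xᵀ i ⬝ᵥ (Xᵀ j - px) = 0)
    (σj2 : ℝ) (hσj2 : σj2 = (Xᵀ j - px) ⬝ᵥ (Xᵀ j - px)) (hσpos : 0 < σj2)
    (sj : ℝ) (hsj0 : 0 ≤ sj) (hsj1 : sj ≤ ((M : ℝ) + 1) * σj2 / M)
    (R : Matrix (Fin n) (Fin M) ℝ)
    (hR1 : Rᵀ * R = 1) (hR2 : Xᵀ * R = 0)
    (C : Matrix (Fin M) (Fin M) ℝ)
    (hC : Cᵀ * C = sj • (1 : Matrix (Fin M) (Fin M) ℝ)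
        + (sj * (1 - sj / σj2)) • Matrix.of (fun _ _ => (1 : ℝ)))
    (Xt : Matrix (Fin n) (Fin M) ℝ)
    (hXt : ∀ i m, Xt i m = (sj / σj2) * px i + (1 - sj / σj2) * Xᵀ j i + (R * C) i m) :
    ∀ m : Fin M,
      (∀ i : Fin p, i ≠ j → Xᵀ i ⬝ᵥ Xtᵀ m = Xᵀ i ⬝ᵥ Xᵀ j) ∧
      Xᵀ j ⬝ᵥ Xtᵀ m = 1 - sj ∧
      Xtᵀ m ⬝ᵥ Xtᵀ m = 1 ∧
      ∀ l : Fin M, l ≠ m → Xtᵀ m ⬝ᵥ Xtᵀ l = 1 - sj := by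
  -- helper: anything in the span is orthogonal to z if generators are
  have key : ∀ z : Fin n → ℝ, (∀ i : Fin p, i ≠ j → Xᵀ i ⬝ᵥ z = 0) →
      ∀ w ∈ Submodule.span ℝ ((fun i : Fin p => Xᵀ i) '' {i : Fin p | i ≠ j}),
      w ⬝ᵥ z = 0 := by
    intro z hz w hw
    induction hw using Submodule.span_induction with
    | mem x hx => obtain ⟨i, hi, rfl⟩ := hx; exact hz i hi
    | zero => simp
    | add x y _ _ hx hy => rw [add_dotProduct, hx, hy, add_zero]
    | smul c x _ hx => rw [smul_dotProduct, hx, smul_zero]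
  set u : Fin n → ℝ := px with hu
  set v : Fin n → ℝ := Xᵀ j with hv
  have hσ : σj2 ≠ 0 := ne_of_gt hσpos
  have hvv : v ⬝ᵥ v = 1 := hcols j
  have hup : u ⬝ᵥ (v - u) = 0 := key _ hpx_orth px hpx_mem
  have huv_uu : u ⬝ᵥ v = u ⬝ᵥ u := by
    have := hup; rw [dotProduct_sub, sub_eq_zero] at this; exact this
  have huv : u ⬝ᵥ v = 1 - σj2 := by
    have h2 : σj2 = 1 - u ⬝ᵥ v := by
      rw [hσj2, sub_dotProduct, dotProduct_sub, dotProduct_sub, hvv,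
        dotProduct_comm v u, huv_uu]
      ring
    linarith
  have huu : u ⬝ᵥ u = 1 - σj2 := by rw [← huv_uu, huv]
  have hvu : v ⬝ᵥ u = 1 - σj2 := by rw [dotProduct_comm, huv]
  -- orthogonality to R's columns
  have hRX : ∀ (i : Fin p) (m' : Fin M), Xᵀ i ⬝ᵥ (fun k => R k m') = 0 := by
    intro i m'
    have := congrFun (congrFun hR2 i) m'
    simpa [Matrix.mul_apply, dotProduct] using this
  have hRz : ∀ z : Fin n → ℝ, (∀ m', z ⬝ᵥ (fun k => R k m') = 0) →
      ∀ c : Fin M → ℝ, z ⬝ᵥ (R *ᵥ c) = 0 := by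
    intro z hz c
    rw [dotProduct_mulVec]
    have : z ᵥ* R = 0 := funext fun m' => hz m'
    rw [this, zero_dotProduct]
  have hRu : ∀ c : Fin M → ℝ, u ⬝ᵥ (R *ᵥ c) = 0 :=
    hRz u (fun m' => key _ (fun i _ => hRX i m') px hpx_mem)
  have hRv : ∀ c : Fin M → ℝ, v ⬝ᵥ (R *ᵥ c) = 0 := hRz v (fun m' => hRX j m')
  have hRR : ∀ c c' : Fin M → ℝ, (R *ᵥ c) ⬝ᵥ (R *ᵥ c') = c ⬝ᵥ c' := by
    intro c c'
    rw [dotProduct_mulVec, ← vecMul_transpose, vecMul_vecMul, hR1, vecMul_one]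
  have hCC : ∀ m l : Fin M, (Cᵀ m) ⬝ᵥ (Cᵀ l)
      = (sj * (if m = l then 1 else 0)) + sj * (1 - sj / σj2) := by
    intro m l
    have h1 : (Cᵀ m) ⬝ᵥ (Cᵀ l) = (Cᵀ * C) m l := by
      simp [Matrix.mul_apply, dotProduct]
    rw [h1, hC]
    simp [Matrix.add_apply, Matrix.smul_apply, Matrix.one_apply, smul_eq_mul]
  have hcol : ∀ m : Fin M, Xtᵀ m
      = (sj / σj2) • u + (1 - sj / σj2) • v + R *ᵥ (Cᵀ m) := by
    intro m
    funext i
    simp only [transpose_apply, hXt, Pi.add_apply, Pi.smul_apply, smul_eq_mul,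
      Matrix.mulVec, dotProduct, Matrix.mul_apply]
  intro m
  refine ⟨?_, ?_, ?_, ?_⟩
  · intro i hi
    have hio : Xᵀ i ⬝ᵥ u = Xᵀ i ⬝ᵥ v := by
      have := hpx_orth i hi
      rw [dotProduct_sub, sub_eq_zero] at this
      exact this.symm
    rw [hcol m, dotProduct_add, dotProduct_add, dotProduct_smul, dotProduct_smul,
      hRz _ (fun m' => hRX i m'), hio]
    simp only [smul_eq_mul]
    ring
  · rw [hcol m, dotProduct_add, dotProduct_add, dotProduct_smul, dotProduct_smul,
      hRv, hvu, hvv]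
    simp only [smul_eq_mul]
    field_simp
    ring
  · rw [hcol m]
    simp only [dotProduct_add, add_dotProduct, dotProduct_smul, smul_dotProduct,
      hRu, hRv, hRR, hCC m m, huu, huv, hvu, hvv, smul_eq_mul,
      dotProduct_comm (R *ᵥ Cᵀ m) u, dotProduct_comm (R *ᵥ Cᵀ m) v]
    field_simp
    rw [if_pos trivial]
    ring
  · intro l hl
    rw [hcol m, hcol l]
    simp only [dotProduct_add, add_dotProduct, dotProduct_smul, smul_dotProduct,
      hRu, hRv, hRR, hCC m l, huu, huv, hvu, hvv, smul_eq_mul,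
      dotProduct_comm (R *ᵥ Cᵀ l) u, dotProduct_comm (R *ᵥ Cᵀ l) v,
      dotProduct_comm (R *ᵥ Cᵀ m) u, dotProduct_comm (R *ᵥ Cᵀ m) v]
    rw [if_neg (Ne.symm hl)]
    field_simp
    ring
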